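/- If w ~ N(0, I_D) is a standard Gaussian vector in R^D and y, ȳ are unit vectors with ‖y − ȳ‖₂ ≤ γ ≤ 1, then the probability that wᵀy and wᵀȳ have strictly opposite signs is at most √(2γ). -/

import Mathlib

open MeasureTheory ProbabilityTheory
open Real Filter Set
open scoped NNReal ENNReal

lemma aux_int_x_exp {b : ℝ} (hb : 0 < b) :
    ∫ x in Set.Ioi (0:ℝ), x * Real.exp (-b * x ^ 2) = 1 / (2 * b) := by
  have key := integral_Ioi_of_hasDerivAt_of_tendsto'
    (f := fun x : ℝ => -(1/(2*b)) * Real.exp (-b * x^2))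
    (f' := fun x : ℝ => x * Real.exp (-b * x^2)) (a := 0) (m := 0)
    (fun x _ => ?_) (integrable_mul_exp_neg_mul_sq hb).integrableOn ?_
  · simpa using key
  · have h1 : HasDerivAt (fun x : ℝ => -b * x^2) (-b * (2*x)) x := by
      simpa [mul_comm] using ((hasDerivAt_pow 2 x).const_mul (-b))
    have h2 := (h1.exp).const_mul (-(1/(2*b)))
    convert h2 using 1
    case e'_4 => rfl
    field_simp
  · have h3 : Tendsto (fun x : ℝ => -b * x^2) atTop atBot := by
      apply Tendsto.const_mul_atTop_of_neg (neg_neg_iff_pos.mpr hb)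
      exact tendsto_pow_atTop (by norm_num)
    have h4 := (Real.tendsto_exp_atBot.comp h3).const_mul (-(1/(2*b)))
    simpa using h4

lemma aux_pdf_int {v : ℝ≥0} (hv : v ≠ 0) :
    ∫ x in Set.Ioi (0:ℝ), x * gaussianPDFReal 0 v x
      = (v : ℝ) * (Real.sqrt (2 * π * v))⁻¹ := by
  have hv' : (0:ℝ) < v := by positivity
  have hb : (0:ℝ) < (2 * (v:ℝ))⁻¹ := by positivity
  have hpt : ∀ x : ℝ, x * gaussianPDFReal 0 v x
      = (Real.sqrt (2 * π * v))⁻¹ * (x * Real.exp (-(2 * (v:ℝ))⁻¹ * x ^ 2)) := by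
    intro x
    rw [gaussianPDFReal]
    have h2 : -(x - 0)^2 / (2 * (v:ℝ)) = -(2 * (v:ℝ))⁻¹ * x ^ 2 := by
      field_simp; ring
    rw [h2]; ring
  simp_rw [hpt]
  rw [MeasureTheory.integral_const_mul, aux_int_x_exp hb]
  field_simp

lemma aux_xpdf_integrable (v : ℝ≥0) (hv : v ≠ 0) :
    Integrable (fun x : ℝ => x * gaussianPDFReal 0 v x) := by
  have hv' : (0:ℝ) < v := by positivity
  have hb : (0:ℝ) < (2 * (v:ℝ))⁻¹ := by positivity
  have hpt : ∀ x : ℝ, x * gaussianPDFReal 0 v x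
      = (Real.sqrt (2 * π * v))⁻¹ * (x * Real.exp (-(2 * (v:ℝ))⁻¹ * x ^ 2)) := by
    intro x
    rw [gaussianPDFReal]
    have h2 : -(x - 0)^2 / (2 * (v:ℝ)) = -(2 * (v:ℝ))⁻¹ * x ^ 2 := by field_simp; ring
    rw [h2]; ring
  simp_rw [hpt]
  exact (integrable_mul_exp_neg_mul_sq hb).const_mul _

lemma aux_tail {v : ℝ≥0} (hv : v ≠ 0) {t : ℝ} (ht : 0 < t) :
    (gaussianReal 0 v) {x : ℝ | t ≤ |x|}
      ≤ ENNReal.ofReal (2 / t * ((v:ℝ) * (Real.sqrt (2 * π * v))⁻¹)) := by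
  rw [gaussianReal_apply_eq_integral 0 hv]
  apply ENNReal.ofReal_le_ofReal
  have hint : Integrable (gaussianPDFReal 0 v) := integrable_gaussianPDFReal 0 v
  have hxint := aux_xpdf_integrable v hv
  have hpdfnn := gaussianPDFReal_nonneg 0 v
  have hsym : ∀ x : ℝ, gaussianPDFReal 0 v (-x) = gaussianPDFReal 0 v x := by
    intro x; simp [gaussianPDFReal]
  have hSeq : {x : ℝ | t ≤ |x|} = Iic (-t) ∪ Ici t := by
    ext x
    simp only [mem_setOf_eq, le_abs, mem_union, mem_Iic, mem_Ici, le_neg]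
    tauto
  have hIoi : ∫ x in Ioi t, gaussianPDFReal 0 v x
      ≤ t⁻¹ * ((v : ℝ) * (Real.sqrt (2 * π * v))⁻¹) := by
    calc ∫ x in Ioi t, gaussianPDFReal 0 v x
        ≤ ∫ x in Ioi t, t⁻¹ * (x * gaussianPDFReal 0 v x) := by
          apply setIntegral_mono_on hint.integrableOn
            ((hxint.const_mul t⁻¹).integrableOn) measurableSet_Ioi
          intro x hx
          have hx' : t < x := hx
          have h1 : (1:ℝ) ≤ t⁻¹ * x := by
            rw [le_inv_mul_iff₀ ht]; linarith
          nlinarith [hpdfnn x]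
      _ = t⁻¹ * ∫ x in Ioi t, x * gaussianPDFReal 0 v x := MeasureTheory.integral_const_mul _ _
      _ ≤ t⁻¹ * ∫ x in Ioi 0, x * gaussianPDFReal 0 v x := by
          apply mul_le_mul_of_nonneg_left _ (by positivity)
          apply setIntegral_mono_set hxint.integrableOn
          · refine (ae_restrict_iff' measurableSet_Ioi).2 (ae_of_all _ fun x hx => ?_)
            exact mul_nonneg (le_of_lt hx) (hpdfnn x)
          · exact HasSubset.Subset.eventuallyLE (Ioi_subset_Ioi ht.le)
      _ = t⁻¹ * ((v : ℝ) * (Real.sqrt (2 * π * v))⁻¹) := by rw [aux_pdf_int hv]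
  have hIic : ∫ x in Iic (-t), gaussianPDFReal 0 v x
      = ∫ x in Ioi t, gaussianPDFReal 0 v x := by
    rw [show (Ioi t) = Ioi (-(-t)) by rw [neg_neg], ← integral_comp_neg_Iic]
    simp_rw [hsym]
  have hdisj : Disjoint (Iic (-t)) (Ici t) := by
    rw [Set.disjoint_iff]
    rintro x ⟨h1, h2⟩
    simp only [mem_Iic, mem_Ici] at h1 h2
    exact absurd (le_trans h2 h1) (by simp; linarith)
  rw [hSeq, setIntegral_union hdisj measurableSet_Ici hint.integrableOn hint.integrableOn,
    integral_Ici_eq_integral_Ioi, hIic]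
  have h2 : 2 / t * ((v : ℝ) * (Real.sqrt (2 * π * v))⁻¹)
      = t⁻¹ * ((v : ℝ) * (Real.sqrt (2 * π * v))⁻¹)
        + t⁻¹ * ((v : ℝ) * (Real.sqrt (2 * π * v))⁻¹) := by ring
  rw [h2]
  exact add_le_add hIoi hIoi

lemma aux_ball {v : ℝ≥0} (hv : v ≠ 0) {t : ℝ} (ht : 0 ≤ t) :
    (gaussianReal 0 v) {x : ℝ | |x| < t}
      ≤ ENNReal.ofReal (2 * t * (Real.sqrt (2 * π * v))⁻¹) := by
  have hv' : (0:ℝ) < v := by positivity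
  rw [gaussianReal_apply_eq_integral 0 hv]
  apply ENNReal.ofReal_le_ofReal
  have hset : {x : ℝ | |x| < t} = Ioo (-t) t := by ext x; simp [abs_lt, mem_Ioo]
  rw [hset]
  calc ∫ x in Ioo (-t) t, gaussianPDFReal 0 v x
      ≤ ∫ _x in Ioo (-t) t, (Real.sqrt (2 * π * (v:ℝ)))⁻¹ := by
        apply setIntegral_mono_on (integrable_gaussianPDFReal 0 v).integrableOn
          (integrableOn_const measure_Ioo_lt_top.ne) measurableSet_Ioo
        intro x _
        rw [gaussianPDFReal]
        have h1 : rexp (-(x - 0)^2/(2*(v:ℝ))) ≤ 1 := by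
          rw [← Real.exp_zero]
          apply Real.exp_le_exp.2
          have h0 : (0:ℝ) ≤ (x - 0)^2 := sq_nonneg _
          have h2 : (0:ℝ) < 2 * (v:ℝ) := by positivity
          apply div_nonpos_of_nonpos_of_nonneg (by linarith) h2.le
        exact mul_le_of_le_one_right (by positivity) h1
    _ = (volume (Ioo (-t) t)).toReal * (Real.sqrt (2 * π * (v:ℝ)))⁻¹ := by
        rw [setIntegral_const, smul_eq_mul]; rfl
    _ ≤ 2 * t * (Real.sqrt (2 * π * (v:ℝ)))⁻¹ := by
        rw [Real.volume_Ioo, ENNReal.toReal_ofReal (by linarith)]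
        apply mul_le_mul_of_nonneg_right (by linarith) (by positivity)

lemma numA : (4.34 : ℝ) ≤ Real.sqrt (6 * π) := by
  have hπ : 3.141592 < π := Real.pi_gt_d6
  have h2 : Real.sqrt (6 * π) ^ 2 = 6 * π := Real.sq_sqrt (by positivity)
  nlinarith [Real.sqrt_nonneg (6 * π)]

lemma numB : (2.5 : ℝ) ≤ Real.sqrt (2 * π) := by
  have hπ : 3.141592 < π := Real.pi_gt_d6
  have h2 : Real.sqrt (2 * π) ^ 2 = 2 * π := Real.sq_sqrt (by positivity)
  nlinarith [Real.sqrt_nonneg (2 * π)]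

lemma numC : (1.414 : ℝ) ≤ Real.sqrt 2 := by
  have h2 : Real.sqrt 2 ^ 2 = 2 := Real.sq_sqrt (by norm_num)
  nlinarith [Real.sqrt_nonneg 2]


/-- If `w ~ N(0, I_D)` is a standard Gaussian vector in `ℝ^D` (characterized by every linear
functional `⟨v, w⟩` being Gaussian with variance `‖v‖²`) and `y`, `ȳ` are unit vectors with
`‖y - ȳ‖₂ ≤ γ ≤ 1`, then the probability that `⟨w, y⟩` and `⟨w, ȳ⟩` have strictly opposite
signs is at most `√(2γ)`. -/
theorem stmt3 {Ω : Type*} [MeasureSpace Ω] [IsProbabilityMeasure (ℙ : Measure Ω)]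
    {D : ℕ} (w : Ω → EuclideanSpace ℝ (Fin D)) (hw : Measurable w)
    (hgauss : ∀ v : EuclideanSpace ℝ (Fin D),
      Measure.map (fun ω => (inner ℝ v (w ω) : ℝ)) ℙ = gaussianReal 0 (Real.toNNReal (‖v‖ ^ 2)))
    (y ybar : EuclideanSpace ℝ (Fin D)) (γ : ℝ)
    (hy : ‖y‖ = 1) (hybar : ‖ybar‖ = 1) (hγ : γ ≤ 1) (hdist : ‖y - ybar‖ ≤ γ) :
    (ℙ {ω | ((0 : ℝ) < inner ℝ y (w ω) ∧ (inner ℝ ybar (w ω) : ℝ) < 0)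
        ∨ ((inner ℝ y (w ω) : ℝ) < 0 ∧ (0 : ℝ) < inner ℝ ybar (w ω))}).toReal
      ≤ Real.sqrt (2 * γ) := by
  have hγ0 : 0 ≤ γ := le_trans (norm_nonneg _) hdist
  by_cases hyb : y = ybar
  · -- event is empty
    have hempty : {ω | ((0 : ℝ) < inner ℝ y (w ω) ∧ (inner ℝ ybar (w ω) : ℝ) < 0)
        ∨ ((inner ℝ y (w ω) : ℝ) < 0 ∧ (0 : ℝ) < inner ℝ ybar (w ω))} = ∅ := by
      ext ω
      simp only [Set.mem_setOf_eq, Set.mem_empty_iff_false, iff_false]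
      subst hyb
      rintro (⟨h1, h2⟩ | ⟨h1, h2⟩) <;> linarith
    rw [hempty]
    simp [Real.sqrt_nonneg]
  · have hγpos : 0 < γ := lt_of_lt_of_le (norm_pos_iff.2 (sub_ne_zero.2 hyb)) hdist
    set g : ℝ := Real.sqrt γ with hg_def
    have hgpos : 0 < g := Real.sqrt_pos.2 hγpos
    have hg2 : g ^ 2 = γ := Real.sq_sqrt hγ0
    set t : ℝ := 4 / 3 * g with ht_def
    have ht : 0 < t := by positivity
    set s : EuclideanSpace ℝ (Fin D) := y + ybar with hs_def
    set d : EuclideanSpace ℝ (Fin D) := y - ybar with hd_def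
    have hd_ne : d ≠ 0 := sub_ne_zero.2 hyb
    have hdnorm_pos : 0 < ‖d‖ := norm_pos_iff.2 hd_ne
    have hdγ : ‖d‖ ≤ γ := hdist
    have hnorm4 : ‖s‖ ^ 2 + ‖d‖ ^ 2 = 4 := by
      have := parallelogram_law_with_norm ℝ y ybar
      rw [hy, hybar] at this
      nlinarith [this]
    have hs3 : 3 ≤ ‖s‖ ^ 2 := by nlinarith [hdnorm_pos]
    -- variances
    set vS : ℝ≥0 := Real.toNNReal (‖s‖ ^ 2) with hvS_def
    set vD : ℝ≥0 := Real.toNNReal (‖d‖ ^ 2) with hvD_def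
    have hvS_coe : (vS : ℝ) = ‖s‖ ^ 2 := Real.coe_toNNReal _ (by positivity)
    have hvD_coe : (vD : ℝ) = ‖d‖ ^ 2 := Real.coe_toNNReal _ (by positivity)
    have hvS_ne : vS ≠ 0 := by
      intro h
      have : (vS : ℝ) = 0 := by rw [h]; simp
      rw [hvS_coe] at this; nlinarith
    have hvD_ne : vD ≠ 0 := by
      intro h
      have : (vD : ℝ) = 0 := by rw [h]; simp
      rw [hvD_coe] at this; nlinarith
    -- random variables
    set X : Ω → ℝ := fun ω => (inner ℝ s (w ω) : ℝ) with hX_def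
    set Y : Ω → ℝ := fun ω => (inner ℝ d (w ω) : ℝ) with hY_def
    have hXm : Measurable X := Measurable.inner measurable_const hw
    have hYm : Measurable Y := Measurable.inner measurable_const hw
    have hAset : MeasurableSet {x : ℝ | |x| < t} :=
      measurableSet_lt continuous_abs.measurable measurable_const
    have hBset : MeasurableSet {x : ℝ | t ≤ |x|} :=
      measurableSet_le measurable_const continuous_abs.measurable
    -- inclusion of the event
    have hsub : {ω | ((0 : ℝ) < inner ℝ y (w ω) ∧ (inner ℝ ybar (w ω) : ℝ) < 0)
        ∨ ((inner ℝ y (w ω) : ℝ) < 0 ∧ (0 : ℝ) < inner ℝ ybar (w ω))}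
        ⊆ X ⁻¹' {x : ℝ | |x| < t} ∪ Y ⁻¹' {x : ℝ | t ≤ |x|} := by
      intro ω hω
      have hXval : X ω = (inner ℝ y (w ω) : ℝ) + (inner ℝ ybar (w ω) : ℝ) := by
        rw [hX_def]; simp only [hs_def]; rw [inner_add_left]
      have hYval : Y ω = (inner ℝ y (w ω) : ℝ) - (inner ℝ ybar (w ω) : ℝ) := by
        rw [hY_def]; simp only [hd_def]; rw [inner_sub_left]
      by_cases hB : t ≤ |Y ω|
      · exact Or.inr hB
      · push_neg at hB
        left
        simp only [Set.mem_preimage, Set.mem_setOf_eq]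
        have hXY : |X ω| < |Y ω| := by
          rcases hω with ⟨h1, h2⟩ | ⟨h1, h2⟩
          · rw [hXval, hYval,
              abs_of_pos (show (0:ℝ) < (inner ℝ y (w ω) : ℝ) - (inner ℝ ybar (w ω) : ℝ) by linarith),
              abs_lt]
            constructor <;> linarith
          · rw [hXval, hYval,
              abs_of_neg (show ((inner ℝ y (w ω) : ℝ) - (inner ℝ ybar (w ω) : ℝ)) < 0 by linarith),
              abs_lt]
            constructor <;> linarith
        exact hXY.trans hB
    -- measure bounds
    have hPA : ℙ (X ⁻¹' {x : ℝ | |x| < t}) = (gaussianReal 0 vS) {x : ℝ | |x| < t} := by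
      rw [← hgauss s, Measure.map_apply hXm hAset]
    have hPB : ℙ (Y ⁻¹' {x : ℝ | t ≤ |x|}) = (gaussianReal 0 vD) {x : ℝ | t ≤ |x|} := by
      rw [← hgauss d, Measure.map_apply hYm hBset]
    set r1 : ℝ := 2 * t * (Real.sqrt (2 * π * vS))⁻¹ with hr1_def
    set r2 : ℝ := 2 / t * ((vD : ℝ) * (Real.sqrt (2 * π * vD))⁻¹) with hr2_def
    have hr1nn : 0 ≤ r1 := by positivity
    have hr2nn : 0 ≤ r2 := by positivity
    -- real arithmetic
    have hsum : r1 + r2 ≤ Real.sqrt (2 * γ) := by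
      set A : ℝ := Real.sqrt (6 * π) with hA_def
      set B : ℝ := Real.sqrt (2 * π) with hB_def
      set C : ℝ := Real.sqrt 2 with hC_def
      have hApos : 0 < A := Real.sqrt_pos.2 (by positivity)
      have hBpos : 0 < B := Real.sqrt_pos.2 (by positivity)
      have hCpos : 0 < C := Real.sqrt_pos.2 (by norm_num)
      have hA434 : (4.34 : ℝ) ≤ A := numA
      have hB25 : (2.5 : ℝ) ≤ B := numB
      have hC14 : (1.414 : ℝ) ≤ C := numC
      -- r1 bound
      have h2πS : A ≤ Real.sqrt (2 * π * vS) := by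
        apply Real.sqrt_le_sqrt
        rw [hvS_coe]
        calc 6 * π = 2 * π * 3 := by ring
          _ ≤ 2 * π * ‖s‖ ^ 2 := by
              apply mul_le_mul_of_nonneg_left hs3 (by positivity)
      have hr1b : r1 ≤ 8 / 3 * g / A := by
        rw [hr1_def, ht_def]
        have hinv : (Real.sqrt (2 * π * vS))⁻¹ ≤ A⁻¹ :=
          inv_anti₀ hApos h2πS
        calc 2 * (4 / 3 * g) * (Real.sqrt (2 * π * vS))⁻¹
            ≤ 2 * (4 / 3 * g) * A⁻¹ := by
              apply mul_le_mul_of_nonneg_left hinv (by positivity)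
          _ = 8 / 3 * g / A := by ring
      -- r2 bound
      have hsqrtD : Real.sqrt (2 * π * vD) = B * ‖d‖ := by
        rw [hvD_coe, show 2 * π * ‖d‖ ^ 2 = (2 * π) * ‖d‖ ^ 2 by ring,
          Real.sqrt_mul (by positivity), Real.sqrt_sq (norm_nonneg _)]
      have hr2b : r2 ≤ 3 / 2 * g / B := by
        rw [hr2_def, hsqrtD, hvD_coe]
        have hstep : ‖d‖ ^ 2 * (B * ‖d‖)⁻¹ = ‖d‖ / B := by
          field_simp
        rw [hstep]
        have h1 : ‖d‖ / B ≤ γ / B := by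
          gcongr
        calc 2 / t * (‖d‖ / B) ≤ 2 / t * (γ / B) := by
              apply mul_le_mul_of_nonneg_left h1 (by positivity)
          _ = 3 / 2 * g / B := by
              rw [ht_def, ← hg2]
              field_simp
              ring
      have hkey : 8 / 3 / A + 3 / 2 / B ≤ C := by
        have e1 : 8 / 3 / A ≤ 8 / 3 / 4.34 :=
          div_le_div_of_nonneg_left (by norm_num) (by norm_num) hA434
        have e2 : 3 / 2 / B ≤ 3 / 2 / 2.5 :=
          div_le_div_of_nonneg_left (by norm_num) (by norm_num) hB25
        have : (8:ℝ) / 3 / 4.34 + 3 / 2 / 2.5 ≤ 1.414 := by norm_num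
        linarith
      have hfinal : 8 / 3 * g / A + 3 / 2 * g / B = g * (8 / 3 / A + 3 / 2 / B) := by
        ring
      have hCg : Real.sqrt (2 * γ) = C * g := by
        rw [hC_def, hg_def, ← Real.sqrt_mul (by norm_num)]
      calc r1 + r2 ≤ 8 / 3 * g / A + 3 / 2 * g / B := add_le_add hr1b hr2b
        _ = g * (8 / 3 / A + 3 / 2 / B) := hfinal
        _ ≤ g * C := mul_le_mul_of_nonneg_left hkey hgpos.le
        _ = Real.sqrt (2 * γ) := by rw [hCg]; ring
    -- put everything together
    have hchain : ℙ {ω | ((0 : ℝ) < inner ℝ y (w ω) ∧ (inner ℝ ybar (w ω) : ℝ) < 0)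
        ∨ ((inner ℝ y (w ω) : ℝ) < 0 ∧ (0 : ℝ) < inner ℝ ybar (w ω))}
        ≤ ENNReal.ofReal (Real.sqrt (2 * γ)) := by
      calc ℙ {ω | ((0 : ℝ) < inner ℝ y (w ω) ∧ (inner ℝ ybar (w ω) : ℝ) < 0)
            ∨ ((inner ℝ y (w ω) : ℝ) < 0 ∧ (0 : ℝ) < inner ℝ ybar (w ω))}
          ≤ ℙ (X ⁻¹' {x : ℝ | |x| < t} ∪ Y ⁻¹' {x : ℝ | t ≤ |x|}) := measure_mono hsub
        _ ≤ ℙ (X ⁻¹' {x : ℝ | |x| < t}) + ℙ (Y ⁻¹' {x : ℝ | t ≤ |x|}) := measure_union_le _ _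
        _ ≤ ENNReal.ofReal r1 + ENNReal.ofReal r2 := by
            rw [hPA, hPB]
            exact add_le_add (aux_ball hvS_ne ht.le) (aux_tail hvD_ne ht)
        _ = ENNReal.ofReal (r1 + r2) := (ENNReal.ofReal_add hr1nn hr2nn).symm
        _ ≤ ENNReal.ofReal (Real.sqrt (2 * γ)) := ENNReal.ofReal_le_ofReal hsum
    exact ENNReal.toReal_le_of_le_ofReal (Real.sqrt_nonneg _) hchain
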